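/- In a residuated lattice A, the following are equivalent: (1) every proper α-filter F satisfies F^⊥ ≠ {1}; (2) every filter F with F^⊥ = {1} contains a dense element; (3) every α-filter F satisfies F = F^⊥⊥. Moreover, each of these conditions implies that A is quasicomplemented. -/
import Mathlib


/-- A (bounded, integral, commutative) residuated lattice. -/
class ResLattice (A : Type*) extends Lattice A, CommMonoid A, OrderBot A where
  himp : A → A → A
  adjunction : ∀ x y z : A, x * y ≤ z ↔ x ≤ himp y z
  le_one : ∀ x : A, x ≤ 1

variable {A : Type*} [ResLattice A]

/-- Coannihilator of a subset: `X^⊥ = {a | a ⊔ x = 1 for all x ∈ X}`. -/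
def Coann (X : Set A) : Set A := {a | ∀ x ∈ X, a ⊔ x = 1}

/-- Coannulet of an element: `x^⊥`. -/
def rperp (x : A) : Set A := Coann {x}

/-- The principal filter generated by `x`. -/
def PFil (x : A) : Set A := {a | ∃ n : ℕ, 0 < n ∧ x ^ n ≤ a}

/-- Filters of a residuated lattice. -/
def IsRLFilter (F : Set A) : Prop :=
  F.Nonempty ∧ (∀ x ∈ F, ∀ y ∈ F, x * y ∈ F) ∧ (∀ x ∈ F, ∀ y : A, x ⊔ y ∈ F)

/-- Prime filters. -/
def IsRLPrime (P : Set A) : Prop :=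
  IsRLFilter P ∧ P ≠ Set.univ ∧ ∀ x y : A, x ⊔ y ∈ P → x ∈ P ∨ y ∈ P

/-- Minimal prime filters. -/
def IsRLMinPrime (P : Set A) : Prop :=
  IsRLPrime P ∧ ∀ Q : Set A, IsRLPrime Q → Q ⊆ P → Q = P

/-- Quasicomplemented residuated lattice. -/
def Quasicomplemented (A : Type*) [ResLattice A] : Prop :=
  ∀ x : A, ∃ y : A, Coann (rperp x) = rperp y

/-- α-filters. -/
def IsAlphaFilter (F : Set A) : Prop :=
  IsRLFilter F ∧ ∀ x ∈ F, Coann (rperp x) ⊆ F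

/-- The α-filter generated by a subset. -/
def alphaGen (X : Set A) : Set A := ⋂₀ {G : Set A | IsAlphaFilter G ∧ X ⊆ G}

section Helpers

variable {A : Type*} [ResLattice A]

lemma RL.le_one (x : A) : x ≤ 1 := ResLattice.le_one x

lemma RL.eq_one_of_le {a b : A} (h : a ≤ b) (ha : a = 1) : b = 1 :=
  le_antisymm (RL.le_one b) (ha ▸ h)

lemma RL.sup_one (a : A) : a ⊔ 1 = 1 := sup_eq_right.mpr (RL.le_one a)
lemma RL.one_sup (a : A) : 1 ⊔ a = 1 := sup_eq_left.mpr (RL.le_one a)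

lemma RL.mul_le_mul_right' {a b : A} (h : a ≤ b) (c : A) : a * c ≤ b * c := by
  have hb : b ≤ ResLattice.himp c (b * c) :=
    (ResLattice.adjunction b c (b * c)).mp le_rfl
  exact (ResLattice.adjunction a c (b * c)).mpr (h.trans hb)

lemma RL.mul_le_mul {a b c d : A} (h1 : a ≤ b) (h2 : c ≤ d) : a * c ≤ b * d := by
  calc a * c ≤ b * c := RL.mul_le_mul_right' h1 c
    _ = c * b := mul_comm b c
    _ ≤ d * b := RL.mul_le_mul_right' h2 b
    _ = b * d := mul_comm d b

lemma RL.mul_le_left (a b : A) : a * b ≤ b := by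
  have := RL.mul_le_mul_right' (RL.le_one a) b
  rwa [one_mul] at this

lemma RL.mul_le_right (a b : A) : a * b ≤ a := by
  rw [mul_comm]; exact RL.mul_le_left b a

lemma RL.mul_sup_eq_one {a b c : A} (ha : a ⊔ c = 1) (hb : b ⊔ c = 1) :
    a * b ⊔ c = 1 := by
  set T := a * b ⊔ c with hT
  have h1 : a * (b ⊔ c) ≤ T := by
    rw [mul_comm]
    apply (ResLattice.adjunction _ a T).mpr
    apply sup_le
    · exact (ResLattice.adjunction b a T).mp (le_trans (mul_comm b a ▸ le_sup_left) le_rfl)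
    · exact (ResLattice.adjunction c a T).mp ((RL.mul_le_right c a).trans le_sup_right)
  have h2 : c * (b ⊔ c) ≤ T := (RL.mul_le_right c (b ⊔ c)).trans le_sup_right
  have h3 : (a ⊔ c) * (b ⊔ c) ≤ T := by
    apply (ResLattice.adjunction _ _ T).mpr
    exact sup_le ((ResLattice.adjunction a _ T).mp h1) ((ResLattice.adjunction c _ T).mp h2)
  rw [ha, hb, one_mul] at h3
  exact le_antisymm (RL.le_one T) h3

lemma mem_coann {X : Set A} {a : A} : a ∈ Coann X ↔ ∀ x ∈ X, a ⊔ x = 1 := Iff.rfl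

lemma mem_rperp {x a : A} : a ∈ rperp x ↔ a ⊔ x = 1 := by
  simp [rperp, Coann]

lemma one_mem_coann (X : Set A) : (1 : A) ∈ Coann X := fun x _ => RL.one_sup x

lemma coann_anti {X Y : Set A} (h : X ⊆ Y) : Coann Y ⊆ Coann X :=
  fun a ha x hx => ha x (h hx)

lemma subset_coann_coann (X : Set A) : X ⊆ Coann (Coann X) :=
  fun x hx a ha => by rw [sup_comm]; exact ha x hx

lemma coann_singleton_one : Coann ({1} : Set A) = Set.univ := by
  ext a
  simp [Coann, RL.sup_one]

lemma mul_mem_coann {X : Set A} {a b : A} (ha : a ∈ Coann X) (hb : b ∈ Coann X) :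
    a * b ∈ Coann X := fun x hx => RL.mul_sup_eq_one (ha x hx) (hb x hx)

lemma eq_one_of_mem_coann_self {X : Set A} {a : A} (h1 : a ∈ Coann X) (h2 : a ∈ X) :
    a = 1 := by
  have := h1 a h2
  rwa [sup_idem] at this

/-- The α-filter generated by a filter `F`, described explicitly. -/
def Hset (F : Set A) : Set A := {a | ∃ f ∈ F, a ∈ Coann (rperp f)}

lemma subset_Hset {F : Set A} : F ⊆ Hset F :=
  fun f hf => ⟨f, hf, fun c hc => by rw [sup_comm]; exact mem_rperp.mp hc⟩

lemma Hset_alpha {F : Set A} (hF : IsRLFilter F) : IsAlphaFilter (Hset F) := by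
  obtain ⟨⟨f0, hf0⟩, hmul, hsup⟩ := hF
  refine ⟨⟨⟨f0, subset_Hset hf0⟩, ?_, ?_⟩, ?_⟩
  · rintro a ⟨f, hf, ha⟩ b ⟨g, hg, hb⟩
    refine ⟨f * g, hmul f hf g hg, fun c hc => ?_⟩
    have hcf : c ∈ rperp f := by
      refine mem_rperp.mpr (RL.eq_one_of_le ?_ (mem_rperp.mp hc))
      exact sup_le_sup_left (RL.mul_le_right f g) c
    have hcg : c ∈ rperp g := by
      refine mem_rperp.mpr (RL.eq_one_of_le ?_ (mem_rperp.mp hc))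
      exact sup_le_sup_left (RL.mul_le_left f g) c
    exact RL.mul_sup_eq_one (ha c hcf) (hb c hcg)
  · rintro a ⟨f, hf, ha⟩ y
    refine ⟨f, hf, fun c hc => RL.eq_one_of_le ?_ (ha c hc)⟩
    exact sup_le_sup_right le_sup_left c
  · rintro a ⟨f, hf, ha⟩ b hb
    refine ⟨f, hf, fun c hc => ?_⟩
    have : c ∈ rperp a := by
      rw [mem_rperp, sup_comm]
      exact ha c hc
    exact hb c this

lemma coann_Hset {F : Set A} (hC : Coann F = {1}) : Coann (Hset F) = {1} := by
  apply Set.eq_of_subset_of_subset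
  · intro c hc
    have : c ∈ Coann F := coann_anti subset_Hset hc
    rw [hC] at this
    exact this
  · intro c hc
    rw [Set.mem_singleton_iff] at hc
    subst hc
    exact one_mem_coann _

lemma dense_of_Hset_univ {F : Set A} (h : Hset F = Set.univ) :
    ∃ d ∈ F, rperp d = ({1} : Set A) := by
  have hbot : (⊥ : A) ∈ Hset F := h ▸ Set.mem_univ ⊥
  obtain ⟨f, hf, hb⟩ := hbot
  refine ⟨f, hf, ?_⟩
  apply Set.eq_of_subset_of_subset
  · intro c hc
    have := hb c hc
    rw [bot_sup_eq] at this
    exact this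
  · intro c hc
    rw [Set.mem_singleton_iff] at hc
    subst hc
    exact mem_rperp.mpr (RL.one_sup f)

lemma p2_of_p1
    (h1 : ∀ F : Set A, IsAlphaFilter F → F ≠ Set.univ → Coann F ≠ {1}) :
    ∀ F : Set A, IsRLFilter F → Coann F = {1} → ∃ d ∈ F, rperp d = {1} := by
  intro F hF hC
  have hU : Hset F = Set.univ := by
    by_contra hne
    exact h1 _ (Hset_alpha hF) hne (coann_Hset hC)
  exact dense_of_Hset_univ hU

lemma p1_of_p2
    (h2 : ∀ F : Set A, IsRLFilter F → Coann F = {1} → ∃ d ∈ F, rperp d = {1}) :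
    ∀ F : Set A, IsAlphaFilter F → F ≠ Set.univ → Coann F ≠ {1} := by
  intro F hF hne hC
  obtain ⟨d, hd, hdd⟩ := h2 F hF.1 hC
  have := hF.2 d hd
  rw [hdd, coann_singleton_one] at this
  exact hne (Set.eq_of_subset_of_subset (Set.subset_univ F) this)

lemma p3_of_p2
    (h2 : ∀ F : Set A, IsRLFilter F → Coann F = {1} → ∃ d ∈ F, rperp d = {1}) :
    ∀ F : Set A, IsAlphaFilter F → F = Coann (Coann F) := by
  intro F hF
  apply Set.eq_of_subset_of_subset (subset_coann_coann F)
  intro x hx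
  obtain ⟨⟨⟨f0, hf0⟩, hmulF, hsupF⟩, halpha⟩ := hF
  set G : Set A := {a | ∃ f ∈ F, ∃ y, y ⊔ x = 1 ∧ f * y ≤ a} with hGdef
  have hFG : F ⊆ G := fun f hf => ⟨f, hf, 1, RL.one_sup x, (mul_one f).le⟩
  have hxG : ∀ y : A, y ⊔ x = 1 → y ∈ G :=
    fun y hy => ⟨f0, hf0, y, hy, RL.mul_le_left f0 y⟩
  have hGfil : IsRLFilter G := by
    refine ⟨⟨f0, hFG hf0⟩, ?_, ?_⟩
    · rintro a ⟨f, hf, y, hy, hle⟩ b ⟨f', hf', y', hy', hle'⟩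
      refine ⟨f * f', hmulF f hf f' hf', y * y', RL.mul_sup_eq_one hy hy', ?_⟩
      calc f * f' * (y * y') = (f * y) * (f' * y') := mul_mul_mul_comm f f' y y'
        _ ≤ a * b := RL.mul_le_mul hle hle'
    · rintro a ⟨f, hf, y, hy, hle⟩ b
      exact ⟨f, hf, y, hy, hle.trans le_sup_left⟩
  have hCG : Coann G = {1} := by
    apply Set.eq_of_subset_of_subset
    · intro c hc
      have hc1 : c ∈ Coann F := coann_anti hFG hc
      have hc2 : c ⊔ x = 1 := by rw [sup_comm]; exact hx c hc1
      have hc3 : c ⊔ c = 1 := hc c (hxG c hc2)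
      rw [sup_idem] at hc3
      exact hc3
    · intro c hc
      rw [Set.mem_singleton_iff] at hc
      subst hc
      exact one_mem_coann _
  obtain ⟨d, hdG, hdd⟩ := h2 G hGfil hCG
  obtain ⟨f, hf, y, hyx, hle⟩ := hdG
  apply halpha (f ⊔ x) (hsupF f hf x)
  intro c hc
  have hc1 : c ⊔ (f ⊔ x) = 1 := mem_rperp.mp hc
  set u := x ⊔ c with hu
  have huf : u ⊔ f = 1 := by
    apply RL.eq_one_of_le _ hc1
    exact sup_le (le_sup_of_le_left le_sup_right)
      (sup_le le_sup_right (le_sup_of_le_left le_sup_left))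
  have huy : u ⊔ y = 1 := by
    apply RL.eq_one_of_le _ hyx
    exact sup_le le_sup_right (le_sup_of_le_left le_sup_left)
  have hufy : u ⊔ f * y = 1 := by
    rw [sup_comm]
    exact RL.mul_sup_eq_one (sup_comm u f ▸ huf) (sup_comm u y ▸ huy)
  have hud : u ⊔ d = 1 :=
    RL.eq_one_of_le (sup_le_sup_left hle u) hufy
  have : u ∈ rperp d := mem_rperp.mpr hud
  rw [hdd, Set.mem_singleton_iff] at this
  exact this

lemma p2_of_p3
    (h3 : ∀ F : Set A, IsAlphaFilter F → F = Coann (Coann F)) :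
    ∀ F : Set A, IsRLFilter F → Coann F = {1} → ∃ d ∈ F, rperp d = {1} := by
  intro F hF hC
  have hH := h3 _ (Hset_alpha hF)
  rw [coann_Hset hC, coann_singleton_one] at hH
  exact dense_of_Hset_univ hH

lemma quasi_of_p2
    (h2 : ∀ F : Set A, IsRLFilter F → Coann F = {1} → ∃ d ∈ F, rperp d = {1}) :
    Quasicomplemented A := by
  intro x
  set G : Set A := {a | ∃ b c : A, b ⊔ x = 1 ∧ c ∈ Coann (rperp x) ∧ b * c ≤ a} with hGdef
  have hbG : ∀ b : A, b ⊔ x = 1 → b ∈ G :=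
    fun b hb => ⟨b, 1, hb, one_mem_coann _, (mul_one b).le⟩
  have hcG : ∀ c : A, c ∈ Coann (rperp x) → c ∈ G :=
    fun c hc => ⟨1, c, RL.one_sup x, hc, (one_mul c).le⟩
  have hGfil : IsRLFilter G := by
    refine ⟨⟨1, hbG 1 (RL.one_sup x)⟩, ?_, ?_⟩
    · rintro a ⟨b, c, hb, hc, hle⟩ a' ⟨b', c', hb', hc', hle'⟩
      refine ⟨b * b', c * c', RL.mul_sup_eq_one hb hb', mul_mem_coann hc hc', ?_⟩
      calc b * b' * (c * c') = (b * c) * (b' * c') := mul_mul_mul_comm b b' c c'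
        _ ≤ a * a' := RL.mul_le_mul hle hle'
    · rintro a ⟨b, c, hb, hc, hle⟩ y
      exact ⟨b, c, hb, hc, hle.trans le_sup_left⟩
  have hCG : Coann G = {1} := by
    apply Set.eq_of_subset_of_subset
    · intro z hz
      have hz1 : z ∈ Coann (Coann (rperp x)) := fun c hc => hz c (hcG c hc)
      have hz2 : z ∈ Coann (rperp x) := fun b hb => hz b (hbG b (mem_rperp.mp hb))
      exact eq_one_of_mem_coann_self hz1 hz2
    · intro z hz
      rw [Set.mem_singleton_iff] at hz
      subst hz
      exact one_mem_coann _
  obtain ⟨d, hdG, hdd⟩ := h2 G hGfil hCG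
  obtain ⟨b, c, hb, hc, hle⟩ := hdG
  refine ⟨b, Set.eq_of_subset_of_subset ?_ ?_⟩
  · intro w hw
    exact mem_rperp.mpr (hw b (mem_rperp.mpr hb))
  · intro w hw z hz
    have hwb : w ⊔ b = 1 := mem_rperp.mp hw
    have hcz : c ⊔ z = 1 := hc z hz
    set u := w ⊔ z with hu
    have hub : u ⊔ b = 1 :=
      RL.eq_one_of_le (sup_le_sup_right le_sup_left b) hwb
    have huc : u ⊔ c = 1 := by
      apply RL.eq_one_of_le _ hcz
      exact sup_le le_sup_right (le_sup_of_le_left le_sup_right)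
    have hubc : u ⊔ b * c = 1 := by
      rw [sup_comm]
      exact RL.mul_sup_eq_one (sup_comm u b ▸ hub) (sup_comm u c ▸ huc)
    have hud : u ⊔ d = 1 :=
      RL.eq_one_of_le (sup_le_sup_left hle u) hubc
    have : u ∈ rperp d := mem_rperp.mpr hud
    rw [hdd, Set.mem_singleton_iff] at this
    exact this

end Helpers

theorem stmt17 :
    (((∀ F : Set A, IsAlphaFilter F → F ≠ Set.univ → Coann F ≠ {1}) ↔
       (∀ F : Set A, IsRLFilter F → Coann F = {1} → ∃ d ∈ F, rperp d = {1})) ∧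
     ((∀ F : Set A, IsRLFilter F → Coann F = {1} → ∃ d ∈ F, rperp d = {1}) ↔
       (∀ F : Set A, IsAlphaFilter F → F = Coann (Coann F)))) ∧
    ((∀ F : Set A, IsAlphaFilter F → F ≠ Set.univ → Coann F ≠ {1}) →
      Quasicomplemented A) := by
  exact ⟨⟨⟨p2_of_p1, p1_of_p2⟩, ⟨p3_of_p2, p2_of_p3⟩⟩,
    fun h1 => quasi_of_p2 (p2_of_p1 h1)⟩
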